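/- Let x < y and let h : [0,1] → [0,1] satisfy C_{x,y}(h) ≥ 2n, yielding labeled points (x₁,0),(x₂,1),…,(x_{2n}) alternating with h(x_j) = x for odd j and h(x_j) = y for even j. If g : [0,1] → ℝ is piecewise monotone with at most P pieces and P ≤ n/4, then the classification error R(g) = (1/(2n)) Σᵢ 1[1[g(xᵢ) ≥ (x+y)/2] ≠ yᵢ] satisfies R(g) ≥ 1/2 - 2P/(2n) ≥ 1/4. -/

import Mathlib

/-- `g` is piecewise monotone on `[0,1]` with at most `P` pieces: `[0,1]` is split by
breakpoints `0 = c 0 ≤ c 1 ≤ ⋯ ≤ c m = 1` (with `m ≤ P`) into intervals on each of which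
`g` is monotone (nondecreasing or nonincreasing). -/
def IsPiecewiseMonotoneWith (g : ℝ → ℝ) (P : ℕ) : Prop :=
  ∃ m : ℕ, m ≤ P ∧ ∃ c : Fin (m + 1) → ℝ, Monotone c ∧ c 0 = 0 ∧ c (Fin.last m) = 1 ∧
    ∀ i : Fin m, MonotoneOn g (Set.Icc (c i.castSucc) (c i.succ)) ∨
      AntitoneOn g (Set.Icc (c i.castSucc) (c i.succ))

open Finset in
lemma error_card_bound (n m : ℕ) (mid : ℝ)
    (pts : Fin (2 * n) → ℝ) (hpts : StrictMono pts)
    (hpts01 : ∀ i, pts i ∈ Set.Icc (0:ℝ) 1)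
    (g : ℝ → ℝ) (c : Fin (m + 1) → ℝ) (hc : Monotone c) (hc0 : c 0 = 0)
    (hc1 : c (Fin.last m) = 1)
    (hmono : ∀ i : Fin m, MonotoneOn g (Set.Icc (c i.castSucc) (c i.succ)) ∨
      AntitoneOn g (Set.Icc (c i.castSucc) (c i.succ))) :
    n ≤ (Finset.univ.filter fun i : Fin (2 * n) =>
          (if mid ≤ g (pts i) then (1:ℕ) else 0) ≠
          (if (i : ℕ) % 2 = 0 then 0 else 1)).card + 2 * m := by
  classical
  -- m ≥ 1
  have hm1 : 1 ≤ m := by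
    by_contra hm
    push_neg at hm
    interval_cases m
    have h01 : (0:ℝ) = 1 := by
      rw [← hc0, ← hc1]; rfl
    linarith
  -- existence of a piece containing any point of [0,1]
  have hpiece : ∀ t : ℝ, 0 ≤ t → t ≤ 1 → ∃ j : Fin m,
      c j.castSucc ≤ t ∧ t ≤ c j.succ := by
    intro t ht0 ht1
    obtain ⟨j, hj, hjmax⟩ := Finset.exists_max_image
      (Finset.univ.filter fun j : Fin (m+1) => c j ≤ t) id
      ⟨0, by simp [hc0, ht0]⟩
    simp only [Finset.mem_filter, Finset.mem_univ, true_and] at hj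
    by_cases hjm : (j : ℕ) < m
    · refine ⟨⟨(j:ℕ), hjm⟩, ?_, ?_⟩
      · have he : (⟨(j:ℕ), hjm⟩ : Fin m).castSucc = j := by
          ext; simp
        rw [he]; exact hj
      · by_contra hlt
        push_neg at hlt
        have hmem : (⟨(j:ℕ), hjm⟩ : Fin m).succ ∈
            Finset.univ.filter fun j : Fin (m+1) => c j ≤ t := by
          simp only [Finset.mem_filter, Finset.mem_univ, true_and]
          linarith
        have := hjmax _ hmem
        simp only [id_eq, Fin.le_def, Fin.val_succ] at this
        omega
    · have hjm' : (j : ℕ) = m := by have := j.isLt; omega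
      have hjl : j = Fin.last m := by ext; simpa using hjm'
      have ht1' : t = 1 := le_antisymm ht1 (by rw [← hc1, ← hjl]; exact hj)
      refine ⟨⟨m - 1, by omega⟩, ?_, ?_⟩
      · rw [ht1', ← hc1]
        exact hc (Fin.le_last _)
      · have hs : (⟨m - 1, by omega⟩ : Fin m).succ = Fin.last m := by
          ext; simp; omega
        rw [hs, hc1, ht1']
    -- pair embeddings
  have h2n : ∀ k : Fin n, 2 * (k:ℕ) < 2 * n := by intro k; have := k.isLt; omega
  have h2n1 : ∀ k : Fin n, 2 * (k:ℕ) + 1 < 2 * n := by intro k; have := k.isLt; omega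
  set e0 : Fin n → Fin (2 * n) := fun k => ⟨2 * k, h2n k⟩ with he0
  set e1 : Fin n → Fin (2 * n) := fun k => ⟨2 * k + 1, h2n1 k⟩ with he1
  set E := (Finset.univ.filter fun i : Fin (2 * n) =>
          (if mid ≤ g (pts i) then (1:ℕ) else 0) ≠
          (if (i : ℕ) % 2 = 0 then 0 else 1)) with hE
  set S := (Finset.univ.filter fun k : Fin n =>
      g (pts (e0 k)) < mid ∧ mid ≤ g (pts (e1 k))) with hS
  -- choose piece for each point
  have Jspec : ∀ i : Fin (2 * n), ∃ j : Fin m,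
      c j.castSucc ≤ pts i ∧ pts i ≤ c j.succ :=
    fun i => hpiece (pts i) (hpts01 i).1 (hpts01 i).2
  -- S.card ≤ 2 * m
  have hScard : S.card ≤ 2 * m := by
    set F : Fin n → Fin m × Bool := fun k =>
      if hcase : ∃ j : Fin m, (c j.castSucc ≤ pts (e0 k) ∧ pts (e0 k) ≤ c j.succ)
          ∧ (c j.castSucc ≤ pts (e1 k) ∧ pts (e1 k) ≤ c j.succ) then
        (hcase.choose, false)
      else ((Jspec (e0 k)).choose, true) with hF
    have key : ∀ k ∈ S, ∀ k' ∈ S, k < k' → F k ≠ F k' := by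
      intro k hk k' hk' hlt heq
      simp only [hS, Finset.mem_filter, Finset.mem_univ, true_and] at hk hk'
      have p01 : pts (e0 k) < pts (e1 k) := hpts (by simp [he0, he1, Fin.lt_def])
      have p12 : pts (e1 k) ≤ pts (e0 k') := le_of_lt <| hpts (by
        simp only [he0, he1, Fin.lt_def]
        have : (k:ℕ) < k' := hlt
        omega)
      have p23 : pts (e0 k') < pts (e1 k') := hpts (by simp [he0, he1, Fin.lt_def])
      by_cases hcase : ∃ j : Fin m, (c j.castSucc ≤ pts (e0 k) ∧ pts (e0 k) ≤ c j.succ)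
          ∧ (c j.castSucc ≤ pts (e1 k) ∧ pts (e1 k) ≤ c j.succ)
      · by_cases hcase' : ∃ j : Fin m, (c j.castSucc ≤ pts (e0 k') ∧ pts (e0 k') ≤ c j.succ)
            ∧ (c j.castSucc ≤ pts (e1 k') ∧ pts (e1 k') ≤ c j.succ)
        · -- both case A
          rw [hF] at heq
          simp only [dif_pos hcase, dif_pos hcase'] at heq
          have hjj : hcase.choose = hcase'.choose := (Prod.ext_iff.mp heq).1
          set j := hcase.choose with hj
          obtain ⟨⟨ha1, ha2⟩, ⟨hb1, hb2⟩⟩ := hcase.choose_spec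
          obtain ⟨⟨ha1', ha2'⟩, _⟩ := hcase'.choose_spec
          rw [← hjj] at ha1' ha2'
          rcases hmono j with hmon | hant
          · have := hmon (Set.mem_Icc.mpr ⟨hb1, hb2⟩) (Set.mem_Icc.mpr ⟨ha1', ha2'⟩) p12
            linarith [hk.2, hk'.1]
          · have := hant (Set.mem_Icc.mpr ⟨ha1, ha2⟩) (Set.mem_Icc.mpr ⟨hb1, hb2⟩) p01.le
            linarith [hk.1, hk.2]
        · rw [hF] at heq
          simp only [dif_pos hcase, dif_neg hcase'] at heq
          exact absurd (Prod.ext_iff.mp heq).2 (by simp)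
      · by_cases hcase' : ∃ j : Fin m, (c j.castSucc ≤ pts (e0 k') ∧ pts (e0 k') ≤ c j.succ)
            ∧ (c j.castSucc ≤ pts (e1 k') ∧ pts (e1 k') ≤ c j.succ)
        · rw [hF] at heq
          simp only [dif_neg hcase, dif_pos hcase'] at heq
          exact absurd (Prod.ext_iff.mp heq).2 (by simp)
        · -- both case B
          rw [hF] at heq
          simp only [dif_neg hcase, dif_neg hcase'] at heq
          have hjj : (Jspec (e0 k)).choose = (Jspec (e0 k')).choose := (Prod.ext_iff.mp heq).1
          obtain ⟨ha1, ha2⟩ := (Jspec (e0 k)).choose_spec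
          obtain ⟨hb1, hb2⟩ := (Jspec (e0 k')).choose_spec
          rw [← hjj] at hb1 hb2
          exact hcase ⟨(Jspec (e0 k)).choose, ⟨ha1, ha2⟩, ⟨le_trans ha1 p01.le, le_trans p12 hb2⟩⟩
    have hinj : Set.InjOn F S := by
      intro k hk k' hk' heq
      by_contra hne
      rcases lt_or_gt_of_ne hne with hlt | hlt
      · exact key k hk k' hk' hlt heq
      · exact key k' hk' k hk hlt heq.symm
    calc S.card ≤ (Finset.univ : Finset (Fin m × Bool)).card :=
          Finset.card_le_card_of_injOn F (fun k _ => Finset.mem_univ _) hinj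
      _ = 2 * m := by simp [Finset.card_univ, mul_comm]
  -- every pair not in S contributes an error
  have hTE : ((Finset.univ : Finset (Fin n)) \ S).card ≤ E.card := by
    set G : Fin n → Fin (2 * n) := fun k =>
      if mid ≤ g (pts (e0 k)) then e0 k else e1 k with hG
    apply Finset.card_le_card_of_injOn G
    · intro k hk
      simp only [Finset.mem_coe, Finset.mem_sdiff, Finset.mem_univ, true_and, hS, Finset.mem_filter,
        not_and, not_le, not_lt] at hk
      simp only [Finset.mem_coe, hE, Finset.mem_filter, Finset.mem_univ, true_and, hG]
      by_cases hg0 : mid ≤ g (pts (e0 k))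
      · simp only [if_pos hg0]
        have : ((e0 k : Fin (2*n)) : ℕ) % 2 = 0 := by simp [he0, Nat.mul_mod_right]
        simp [hg0, this]
      · simp only [if_neg hg0]
        have hg1 : ¬ mid ≤ g (pts (e1 k)) := not_le.mpr (hk (not_le.mp hg0))
        have : ((e1 k : Fin (2*n)) : ℕ) % 2 = 1 := by
          simp [he1, Nat.add_mul_mod_self_left]
        simp [hg1, this]
    · intro k _ k' _ heq
      have hv : ((G k : Fin (2*n)) : ℕ) / 2 = k ∧ ((G k' : Fin (2*n)) : ℕ) / 2 = k' := by
        constructor <;> · simp only [hG]; split <;> simp [he0, he1] <;> omega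
      have : ((G k : Fin (2*n)) : ℕ) = ((G k' : Fin (2*n)) : ℕ) := by rw [heq]
      have : (k:ℕ) = (k':ℕ) := by rw [← hv.1, ← hv.2, this]
      exact Fin.ext this
  have hT : ((Finset.univ : Finset (Fin n)) \ S).card = n - S.card := by
    rw [Finset.card_sdiff_of_subset (Finset.subset_univ _), Finset.card_univ, Fintype.card_fin]
  have hSn : S.card ≤ n := le_trans (Finset.card_le_card (Finset.subset_univ _)) (by simp)
  omega


/-- The counting lemma: given `2n` increasing points in `[0,1]` with alternating labels
(label `0` at odd positions `j = 1,3,…`, i.e. even `0`-based indices, where `h` takes the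
value `x`; label `1` at even positions, where `h` takes the value `y`), any piecewise
monotone `g` with at most `P ≤ n/4` pieces has classification error
`R(g) ≥ 1/2 - 2P/(2n) ≥ 1/4`. -/
theorem piecewise_monotone_classification_error (n : ℕ) (hn : 1 ≤ n)
    (x y : ℝ) (hxy : x < y) (h : ℝ → ℝ)
    (pts : Fin (2 * n) → ℝ) (hpts : StrictMono pts)
    (hpts01 : ∀ i, pts i ∈ Set.Icc (0:ℝ) 1)
    (hh : ∀ i : Fin (2 * n), h (pts i) = if (i : ℕ) % 2 = 0 then x else y)
    (g : ℝ → ℝ) (P : ℕ) (hP : IsPiecewiseMonotoneWith g P) (hPn : 4 * P ≤ n) :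
    (1:ℝ)/2 - 2 * P / (2 * n) ≤
      ((Finset.univ.filter fun i : Fin (2 * n) =>
          (if (x + y) / 2 ≤ g (pts i) then (1:ℕ) else 0) ≠
          (if (i : ℕ) % 2 = 0 then 0 else 1)).card : ℝ) / (2 * n) ∧
    (1:ℝ)/4 ≤
      ((Finset.univ.filter fun i : Fin (2 * n) =>
          (if (x + y) / 2 ≤ g (pts i) then (1:ℕ) else 0) ≠
          (if (i : ℕ) % 2 = 0 then 0 else 1)).card : ℝ) / (2 * n) := by
  obtain ⟨m, hmP, c, hc, hc0, hc1, hmono⟩ := hP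
  have hkey := error_card_bound n m ((x + y) / 2) pts hpts hpts01 g c hc hc0 hc1 hmono
  set Ec := (Finset.univ.filter fun i : Fin (2 * n) =>
          (if (x + y) / 2 ≤ g (pts i) then (1:ℕ) else 0) ≠
          (if (i : ℕ) % 2 = 0 then 0 else 1)).card with hEc
  have hEcP : (n : ℝ) ≤ (Ec : ℝ) + 2 * P := by
    have : n ≤ Ec + 2 * P := le_trans hkey (by omega)
    exact_mod_cast this
  have hn0 : (0:ℝ) < (n:ℝ) := by exact_mod_cast hn
  have hn' : (0:ℝ) < 2 * (n:ℝ) := by linarith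
  have hPn' : 4 * (P:ℝ) ≤ (n:ℝ) := by exact_mod_cast hPn
  have main : (1:ℝ)/2 - 2 * P / (2 * n) ≤ (Ec : ℝ) / (2 * n) := by
    calc (1:ℝ)/2 - 2 * P / (2 * n) = ((n:ℝ) - 2 * P) / (2 * n) := by
          field_simp
      _ ≤ (Ec : ℝ) / (2 * n) := by
          apply (div_le_div_iff_of_pos_right hn').mpr
          linarith
  refine ⟨main, le_trans ?_ main⟩
  have h2P : 2 * (P:ℝ) / (2 * n) ≤ 1 / 4 := by
    rw [div_le_iff₀ hn']
    linarith
  linarith
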